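/- Let a, b > 0 be real numbers. Then the function s(ξ) = Γ(a + iξ)/Γ(b + iξ) is elliptic of order a − b: there exist constants R > 0 and C > 0 such that for all ξ ∈ ℝ with |ξ| ≥ R one has |Γ(a + iξ)/Γ(b + iξ)| ≥ C (1 + ξ²)^{(a−b)/2}. -/

import Mathlib

open Real Finset Nat Filter intervalIntegral

section GammaRatioAux

lemma phi_diff_bound (ξ t v w : ℝ) (ht : 0 < t) (hv : t ≤ v) (hw : t ≤ w) :
    |2*v/(v^2+ξ^2) - 2*w/(w^2+ξ^2)| ≤ 2*|v-w|/(t^2+ξ^2) := by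
  have hv2 : (0:ℝ) < v^2+ξ^2 := by nlinarith [sq_nonneg ξ]
  have hw2 : (0:ℝ) < w^2+ξ^2 := by nlinarith [sq_nonneg ξ]
  have ht2 : (0:ℝ) < t^2+ξ^2 := by nlinarith [sq_nonneg ξ]
  have key : 2*v/(v^2+ξ^2) - 2*w/(w^2+ξ^2)
      = 2*(w-v)*(v*w-ξ^2)/((v^2+ξ^2)*(w^2+ξ^2)) := by
    field_simp; ring
  rw [key, abs_div, abs_of_pos (by positivity : (0:ℝ) < (v^2+ξ^2)*(w^2+ξ^2)),
    div_le_div_iff₀ (by positivity) ht2]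
  have h1 : |2*(w-v)*(v*w-ξ^2)| = 2 * |v - w| * |v * w - ξ^2| := by
    rw [abs_mul, abs_mul, abs_two, ← abs_neg (w-v), neg_sub]
  rw [h1]
  have hvw : t^2 ≤ v*w := by nlinarith
  have hmid : |v * w - ξ^2| * (t^2+ξ^2) ≤ (v^2+ξ^2)*(w^2+ξ^2) := by
    have c1 : |v * w - ξ^2| ≤ v*w + ξ^2 := by
      rcases abs_cases (v*w-ξ^2) with ⟨h3,_⟩ | ⟨h3,_⟩ <;> nlinarith [sq_nonneg ξ]
    have c2 : t^2+ξ^2 ≤ v*w + ξ^2 := by linarith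
    have c3 : (v*w+ξ^2)*(v*w+ξ^2) ≤ (v^2+ξ^2)*(w^2+ξ^2) := by nlinarith [sq_nonneg (v*ξ - w*ξ)]
    calc |v * w - ξ^2| * (t^2+ξ^2) ≤ (v*w+ξ^2)*(v*w+ξ^2) :=
          mul_le_mul c1 c2 (by positivity) (by nlinarith)
      _ ≤ (v^2+ξ^2)*(w^2+ξ^2) := c3
  calc 2 * |v - w| * |v * w - ξ^2| * (t^2+ξ^2)
      = (2*|v-w|) * (|v * w - ξ^2| * (t^2+ξ^2)) := by ring
    _ ≤ (2*|v-w|) * ((v^2+ξ^2)*(w^2+ξ^2)) := by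
        apply mul_le_mul_of_nonneg_left hmid (by positivity)
    _ = 2 * |v - w| * ((v^2+ξ^2)*(w^2+ξ^2)) := by ring

lemma log_sq_deriv (ξ : ℝ) (hξ : 1 ≤ ξ^2) (v : ℝ) :
    HasDerivAt (fun v : ℝ => Real.log (v^2+ξ^2)) (2*v/(v^2+ξ^2)) v := by
  have h0 : v^2+ξ^2 ≠ 0 := by nlinarith [sq_nonneg v]
  have h1 : HasDerivAt (fun v : ℝ => v^2+ξ^2) (2*v) v := by
    simpa using (hasDerivAt_pow 2 v).add_const (ξ^2)
  have := (Real.hasDerivAt_log h0).comp v h1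
  simpa [div_eq_inv_mul, Function.comp_def] using this

lemma phi_cont (ξ : ℝ) (hξ : 1 ≤ ξ^2) :
    Continuous (fun v : ℝ => 2*v/(v^2+ξ^2)) := by
  apply Continuous.div (by continuity) (by continuity)
  intro v; nlinarith [sq_nonneg v]

lemma ftc_log (ξ : ℝ) (hξ : 1 ≤ ξ^2) (p q : ℝ) :
    Real.log (q^2+ξ^2) - Real.log (p^2+ξ^2) = ∫ v in p..q, 2*v/(v^2+ξ^2) :=
  (integral_eq_sub_of_hasDerivAt (fun v _ => log_sq_deriv ξ hξ v)
    ((phi_cont ξ hξ).intervalIntegrable p q)).symm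

lemma inv_sq_sum_bound (N : ℕ) :
    ∑ k ∈ range N, (1:ℝ)/((k:ℝ)^2+1) ≤ 3 - 3/((N:ℝ)+1) := by
  induction N with
  | zero => simp
  | succ n ih =>
    rw [Finset.sum_range_succ]
    have hn : (0:ℝ) < (n:ℝ)+1 := by positivity
    have hn2 : (0:ℝ) < (n:ℝ)+2 := by positivity
    have key : (1:ℝ)/((n:ℝ)^2+1) ≤ 3/((n:ℝ)+1) - 3/((n:ℝ)+2) := by
      rw [div_sub_div _ _ (ne_of_gt hn) (ne_of_gt hn2), div_le_div_iff₀ (by positivity) (by positivity)]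
      rcases Nat.eq_zero_or_pos n with h | h
      · subst h; norm_num
      · have : (1:ℝ) ≤ (n:ℝ) := by exact_mod_cast h
        nlinarith
    push_cast
    have hc : ((n:ℝ)+1+1) = ((n:ℝ)+2) := by ring
    rw [hc]
    linarith

lemma sum_inv_bound (m ξ : ℝ) (hm : 0 < m) (hξ : 1 ≤ ξ^2) (N : ℕ) :
    ∑ k ∈ range N, (1:ℝ)/((m+k)^2+ξ^2) ≤ 3 := by
  have h1 : ∀ k ∈ range N, (1:ℝ)/((m+k)^2+ξ^2) ≤ 1/((k:ℝ)^2+1) := by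
    intro k _
    gcongr
    nlinarith [Nat.cast_nonneg (α := ℝ) k, sq_nonneg ((k:ℝ))]
  calc ∑ k ∈ range N, (1:ℝ)/((m+k)^2+ξ^2) ≤ ∑ k ∈ range N, (1:ℝ)/((k:ℝ)^2+1) :=
        Finset.sum_le_sum h1
    _ ≤ 3 - 3/((N:ℝ)+1) := inv_sq_sum_bound N
    _ ≤ 3 := by
        have h2 : (0:ℝ) < (N:ℝ)+1 := by positivity
        have h3 : (0:ℝ) ≤ 3/((N:ℝ)+1) := by positivity
        linarith

lemma per_term (a b ξ x : ℝ) (ha : 0 < a) (hb : 0 < b) (hξ : 1 ≤ ξ^2) (hx : 0 ≤ x) :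
    |(Real.log ((a+x)^2+ξ^2) - Real.log ((b+x)^2+ξ^2))
      - (a-b) * (Real.log ((min a b + x + 1)^2+ξ^2) - Real.log ((min a b + x)^2+ξ^2))|
    ≤ 2 * |a-b| * (|a-b| + 1) / ((min a b + x)^2+ξ^2) := by
  set t := min a b + x with htdef
  set ph : ℝ → ℝ := fun v => 2*v/(v^2+ξ^2) with hph
  have ht : 0 < t := by
    have : 0 < min a b := lt_min ha hb
    simp only [htdef]; linarith
  have htD : (0:ℝ) < t^2+ξ^2 := by nlinarith [sq_nonneg t]
  have hInt : ∀ p q : ℝ, IntervalIntegrable (fun v => ph v - ph t) MeasureTheory.volume p q :=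
    fun p q => (((phi_cont ξ hξ)).sub continuous_const).intervalIntegrable p q
  -- bound on first integral
  have hB1 : ∀ v ∈ Set.uIoc (b+x) (a+x), ‖ph v - ph t‖ ≤ 2 * |a-b| / (t^2+ξ^2) := by
    intro v hv
    have hmem : t ≤ v ∧ v ≤ max a b + x := by
      rcases Set.mem_uIoc.mp hv with ⟨h1,h2⟩ | ⟨h1,h2⟩
      · refine ⟨le_trans ?_ h1.le, le_trans h2 ?_⟩
        · simp only [htdef]; linarith [min_le_right a b]
        · linarith [le_max_left a b]
      · refine ⟨le_trans ?_ h1.le, le_trans h2 ?_⟩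
        · simp only [htdef]; linarith [min_le_left a b]
        · linarith [le_max_right a b]
    have h3 : |v - t| ≤ |a - b| := by
      rw [abs_of_nonneg (by linarith [hmem.1])]
      have h4 : max a b - min a b = |a - b| := by rw [abs_sub_comm]; exact max_sub_min_eq_abs a b
      simp only [htdef] at hmem ⊢; linarith [hmem.2]
    calc ‖ph v - ph t‖ ≤ 2*|v-t|/(t^2+ξ^2) := phi_diff_bound ξ t v t ht hmem.1 le_rfl
      _ ≤ 2 * |a-b| / (t^2+ξ^2) := by gcongr
  have hE1 : ‖∫ v in (b+x)..(a+x), (ph v - ph t)‖ ≤ 2 * |a-b| / (t^2+ξ^2) * |a-b| := by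
    have := intervalIntegral.norm_integral_le_of_norm_le_const hB1
    have heq : |(a+x) - (b+x)| = |a-b| := by ring_nf
    rwa [heq] at this
  -- bound on second integral
  have hB2 : ∀ v ∈ Set.uIoc t (t+1), ‖ph v - ph t‖ ≤ 2 / (t^2+ξ^2) := by
    intro v hv
    rw [Set.uIoc_of_le (by linarith : t ≤ t+1)] at hv
    have h3 : |v - t| ≤ 1 := by
      rw [abs_of_nonneg (by linarith [hv.1.le])]; linarith [hv.2]
    calc ‖ph v - ph t‖ ≤ 2*|v-t|/(t^2+ξ^2) := phi_diff_bound ξ t v t ht hv.1.le le_rfl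
      _ ≤ 2 * 1 / (t^2+ξ^2) := by gcongr
      _ = 2 / (t^2+ξ^2) := by ring
  have hE2 : ‖∫ v in t..(t+1), (ph v - ph t)‖ ≤ 2 / (t^2+ξ^2) := by
    have := intervalIntegral.norm_integral_le_of_norm_le_const hB2
    have heq : |(t+1) - t| = 1 := by simp
    rwa [heq, mul_one] at this
  -- rewrite the target as combination of the two integrals
  have hsplit1 : (∫ v in (b+x)..(a+x), (ph v - ph t))
      = (Real.log ((a+x)^2+ξ^2) - Real.log ((b+x)^2+ξ^2)) - (a-b) * ph t := by
    rw [intervalIntegral.integral_sub ((phi_cont ξ hξ).intervalIntegrable _ _)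
      (intervalIntegrable_const), intervalIntegral.integral_const, ftc_log ξ hξ]
    simp [smul_eq_mul]
  have hsplit2 : (∫ v in t..(t+1), (ph v - ph t))
      = (Real.log ((t+1)^2+ξ^2) - Real.log (t^2+ξ^2)) - ph t := by
    rw [intervalIntegral.integral_sub ((phi_cont ξ hξ).intervalIntegrable _ _)
      (intervalIntegrable_const), intervalIntegral.integral_const, ftc_log ξ hξ]
    simp [smul_eq_mul]
  have hkey : (Real.log ((a+x)^2+ξ^2) - Real.log ((b+x)^2+ξ^2))
      - (a-b) * (Real.log ((min a b + x + 1)^2+ξ^2) - Real.log ((min a b + x)^2+ξ^2))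
      = (∫ v in (b+x)..(a+x), (ph v - ph t)) - (a-b) * (∫ v in t..(t+1), (ph v - ph t)) := by
    rw [hsplit1, hsplit2, ← htdef]; ring
  rw [hkey]
  calc |(∫ v in (b+x)..(a+x), (ph v - ph t)) - (a-b) * (∫ v in t..(t+1), (ph v - ph t))|
      ≤ |∫ v in (b+x)..(a+x), (ph v - ph t)| + |a-b| * |∫ v in t..(t+1), (ph v - ph t)| := by
        calc _ ≤ |∫ v in (b+x)..(a+x), (ph v - ph t)| + |(a-b) * ∫ v in t..(t+1), (ph v - ph t)| :=
            abs_sub _ _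
          _ = _ := by rw [abs_mul]
    _ ≤ 2 * |a-b| / (t^2+ξ^2) * |a-b| + |a-b| * (2 / (t^2+ξ^2)) := by
        exact add_le_add hE1 (mul_le_mul_of_nonneg_left hE2 (abs_nonneg _))
    _ = 2 * |a-b| * (|a-b| + 1) / (t^2+ξ^2) := by field_simp

lemma key_sum (a b ξ : ℝ) (ha : 0 < a) (hb : 0 < b) (hξ : 1 ≤ ξ^2) (N : ℕ) :
    |(∑ k ∈ range N, (Real.log ((a+k)^2+ξ^2) - Real.log ((b+k)^2+ξ^2)))
      - (a-b) * (Real.log ((min a b + N)^2+ξ^2) - Real.log ((min a b)^2+ξ^2))|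
    ≤ 6 * |a-b| * (|a-b| + 1) := by
  set m := min a b with hm
  have hm0 : 0 < m := lt_min ha hb
  set f : ℕ → ℝ := fun k => Real.log ((m+k)^2+ξ^2) with hf
  have tel : ∑ k ∈ range N, ((a-b) * (f (k+1) - f k)) = (a-b) * (f N - f 0) := by
    rw [← Finset.mul_sum, Finset.sum_range_sub]
  have hf0 : f 0 = Real.log (m^2+ξ^2) := by simp [hf]
  have key : (∑ k ∈ range N, (Real.log ((a+k)^2+ξ^2) - Real.log ((b+k)^2+ξ^2)))
      - (a-b) * (Real.log ((m + N)^2+ξ^2) - Real.log (m^2+ξ^2))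
      = ∑ k ∈ range N, ((Real.log ((a+k)^2+ξ^2) - Real.log ((b+k)^2+ξ^2))
          - (a-b) * (f (k+1) - f k)) := by
    have split : (∑ k ∈ range N, ((Real.log ((a+k)^2+ξ^2) - Real.log ((b+k)^2+ξ^2))
        - (a-b) * (f (k+1) - f k)))
        = (∑ k ∈ range N, (Real.log ((a+k)^2+ξ^2) - Real.log ((b+k)^2+ξ^2)))
          - ∑ k ∈ range N, ((a-b) * (f (k+1) - f k)) := Finset.sum_sub_distrib _ _
    rw [split, tel, hf0]
  rw [key]
  calc |∑ k ∈ range N, ((Real.log ((a+k)^2+ξ^2) - Real.log ((b+k)^2+ξ^2))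
          - (a-b) * (f (k+1) - f k))|
      ≤ ∑ k ∈ range N, |(Real.log ((a+k)^2+ξ^2) - Real.log ((b+k)^2+ξ^2))
          - (a-b) * (f (k+1) - f k)| := Finset.abs_sum_le_sum_abs _ _
    _ ≤ ∑ k ∈ range N, 2 * |a-b| * (|a-b| + 1) / ((m+k)^2+ξ^2) := by
        apply Finset.sum_le_sum
        intro k _
        have hx : (0:ℝ) ≤ (k:ℝ) := Nat.cast_nonneg k
        have := per_term a b ξ (k:ℝ) ha hb hξ hx
        have hcast : ((k+1:ℕ):ℝ) = (k:ℝ) + 1 := by push_cast; ring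
        simp only [hf, hcast]
        rw [← hm] at this
        rw [show m + ((k:ℝ)+1) = m + k + 1 by ring]
        exact this
    _ = 2 * |a-b| * (|a-b| + 1) * ∑ k ∈ range N, (1:ℝ)/((m+k)^2+ξ^2) := by
        rw [Finset.mul_sum]; congr 1; ext k; ring
    _ ≤ 2 * |a-b| * (|a-b| + 1) * 3 := by
        apply mul_le_mul_of_nonneg_left (sum_inv_bound m ξ hm0 hξ N) (by positivity)
    _ = 6 * |a-b| * (|a-b| + 1) := by ring

lemma gammaSeq_abs_sq (x ξ : ℝ) (hx : 0 < x) (n : ℕ) (hn : 1 ≤ n) :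
    (‖ Complex.GammaSeq ((x:ℂ) + ξ*Complex.I) n‖)^2
      = ((n:ℝ)^x * (n ! : ℝ))^2 / ∏ j ∈ range (n+1), ((x+j)^2+ξ^2) := by
  rw [Complex.GammaSeq, norm_div, norm_mul, norm_prod]
  have h1 : ‖ (n:ℂ) ^ ((x:ℂ) + ξ*Complex.I)‖ = (n:ℝ)^x := by
    have hn0 : (0:ℝ) < (n:ℝ) := by exact_mod_cast hn
    rw [show ((n:ℂ)) = (((n:ℝ)):ℂ) by push_cast; ring,
      Complex.norm_cpow_eq_rpow_re_of_pos hn0]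
    congr 1
    simp
  have h2 : ‖ (n ! : ℂ)‖ = (n ! : ℝ) := by
    rw [show ((n ! : ℂ)) = (((n ! : ℝ)):ℂ) by push_cast; ring, Complex.norm_real, Real.norm_eq_abs,
      abs_of_pos (by exact_mod_cast Nat.factorial_pos n)]
  rw [h1, h2, div_pow, ← Finset.prod_pow]
  congr 1
  apply Finset.prod_congr rfl
  intro j _
  rw [Complex.sq_norm, Complex.normSq_apply]
  simp [Complex.add_re, Complex.add_im]
  ring

lemma den_pos (x ξ : ℝ) (hx : 0 < x) (k : ℕ) : (0:ℝ) < (x+(k:ℝ))^2+ξ^2 := by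
  have h1 : (0:ℝ) < x + (k:ℝ) := by linarith [Nat.cast_nonneg (α := ℝ) k]
  nlinarith [sq_nonneg ξ]

lemma two_log_gammaSeq (x ξ : ℝ) (hx : 0 < x) (n : ℕ) (hn : 1 ≤ n) :
    2 * Real.log (‖ Complex.GammaSeq ((x:ℂ) + ξ*Complex.I) n‖)
      = 2*(x*Real.log n + Real.log (n ! : ℝ))
        - ∑ k ∈ range (n+1), Real.log ((x+k)^2+ξ^2) := by
  have hn0 : (0:ℝ) < (n:ℝ) := by exact_mod_cast hn
  have hfac : (0:ℝ) < (n ! : ℝ) := by exact_mod_cast n.factorial_pos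
  have habs := gammaSeq_abs_sq x ξ hx n hn
  set Q := ‖ Complex.GammaSeq ((x:ℂ) + ξ*Complex.I) n‖ with hQ
  have h2 : (2:ℝ) * Real.log Q = Real.log (Q^2) := by
    rw [Real.log_pow]; norm_num
  rw [h2, habs, Real.log_div (by positivity)
      (ne_of_gt (Finset.prod_pos (fun k _ => den_pos x ξ hx k))),
    Real.log_pow, Real.log_mul (by positivity) (ne_of_gt hfac),
    Real.log_rpow hn0, Real.log_prod (fun k _ => ne_of_gt (den_pos x ξ hx k))]
  norm_num

lemma gammaSeq_abs_ne (x ξ : ℝ) (hx : 0 < x) (n : ℕ) (hn : 1 ≤ n) :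
    ‖ Complex.GammaSeq ((x:ℂ) + ξ*Complex.I) n‖ ≠ 0 := by
  have hn0 : (0:ℝ) < (n:ℝ) := by exact_mod_cast hn
  have hfac : (0:ℝ) < (n ! : ℝ) := by exact_mod_cast n.factorial_pos
  have habs := gammaSeq_abs_sq x ξ hx n hn
  have hpos : (0:ℝ) < (‖ Complex.GammaSeq ((x:ℂ) + ξ*Complex.I) n‖)^2 := by
    rw [habs]
    exact div_pos (by positivity) (Finset.prod_pos (fun k _ => den_pos x ξ hx k))
  intro h
  rw [h] at hpos
  norm_num at hpos

lemma two_log_ratio (a b ξ : ℝ) (ha : 0 < a) (hb : 0 < b) (n : ℕ) (hn : 1 ≤ n) :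
    2 * Real.log (‖ Complex.GammaSeq ((a:ℂ)+ξ*Complex.I) n
        / Complex.GammaSeq ((b:ℂ)+ξ*Complex.I) n‖)
      = 2*(a-b)*Real.log n
        + ∑ k ∈ range (n+1), (Real.log ((b+k)^2+ξ^2) - Real.log ((a+k)^2+ξ^2)) := by
  rw [norm_div, Real.log_div (gammaSeq_abs_ne a ξ ha n hn) (gammaSeq_abs_ne b ξ hb n hn),
    mul_sub, two_log_gammaSeq a ξ ha n hn, two_log_gammaSeq b ξ hb n hn,
    Finset.sum_sub_distrib]
  ring

lemma Gamma_pos_re_ne_zero (x ξ : ℝ) (hx : 0 < x) :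
    Complex.Gamma ((x:ℂ) + ξ*Complex.I) ≠ 0 := by
  apply Complex.Gamma_ne_zero
  intro m h
  have h2 := congrArg Complex.re h
  simp at h2
  nlinarith [Nat.cast_nonneg (α := ℝ) m]

lemma corr_tendsto (c m ξ : ℝ) (hm : 0 < m) :
    Filter.Tendsto (fun n : ℕ => c*(2*Real.log n - Real.log ((m+n+1)^2+ξ^2)))
      Filter.atTop (nhds 0) := by
  have a1 := tendsto_const_div_atTop_nhds_zero_nat (m+1)
  have a2 := tendsto_const_div_atTop_nhds_zero_nat ξ
  have h1 : Filter.Tendsto (fun n:ℕ => (1+(m+1)/(n:ℝ))^2 + (ξ/n)^2)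
      Filter.atTop (nhds 1) := by
    have := ((tendsto_const_nhds (x := (1:ℝ)).add a1).pow 2).add (a2.pow 2)
    norm_num at this
    exact this
  have h2 : Filter.Tendsto (fun n:ℕ => Real.log ((1+(m+1)/(n:ℝ))^2+(ξ/n)^2))
      Filter.atTop (nhds 0) := by
    have := (Real.continuousAt_log one_ne_zero).tendsto.comp h1
    simpa [Function.comp_def] using this
  have h3 : Filter.Tendsto (fun n:ℕ => -c * Real.log ((1+(m+1)/(n:ℝ))^2+(ξ/n)^2))
      Filter.atTop (nhds 0) := by
    have := h2.const_mul (-c)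
    simpa using this
  apply h3.congr'
  filter_upwards [Filter.eventually_ge_atTop 1] with n hn
  have hn0 : (0:ℝ) < (n:ℝ) := by exact_mod_cast hn
  have hd : (0:ℝ) < (m+n+1)^2+ξ^2 := by nlinarith [sq_nonneg ξ, sq_nonneg (m+n+1)]
  have e1 : (1+(m+1)/(n:ℝ))^2+(ξ/n)^2 = ((m+n+1)^2+ξ^2)/((n:ℝ)^2) := by
    field_simp; ring
  rw [e1, Real.log_div (ne_of_gt hd) (by positivity)]
  have e2 : Real.log ((n:ℝ)^2) = 2 * Real.log n := by
    rw [Real.log_pow]; norm_num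
  rw [e2]; ring

end GammaRatioAux


/-- For real `a, b > 0`, the function `s(ξ) = Γ(a + iξ)/Γ(b + iξ)` is elliptic
of order `a - b`: there exist `R > 0` and `C > 0` such that for all `ξ ∈ ℝ` with `|ξ| ≥ R`,
`|Γ(a + iξ)/Γ(b + iξ)| ≥ C (1 + ξ²)^((a-b)/2)`. -/
theorem gamma_ratio_elliptic (a b : ℝ) (ha : 0 < a) (hb : 0 < b) :
    ∃ R : ℝ, 0 < R ∧ ∃ C : ℝ, 0 < C ∧ ∀ ξ : ℝ, R ≤ |ξ| →
      C * (1 + ξ ^ 2) ^ ((a - b) / 2) ≤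
        ‖ Complex.Gamma ((a : ℂ) + ξ * Complex.I) /
          Complex.Gamma ((b : ℂ) + ξ * Complex.I)‖ := by
  have hm0 : 0 < min a b := lt_min ha hb
  set K1 : ℝ := 6 * |a-b| * (|a-b| + 1) with hK1
  set M2 : ℝ := |a-b| * Real.log (2 * max 1 ((min a b)^2)) with hM2
  set M : ℝ := K1 + M2 with hM
  refine ⟨1, one_pos, Real.exp (-M/2), Real.exp_pos _, ?_⟩
  intro ξ hξR
  have hξ : 1 ≤ ξ^2 := by nlinarith [sq_abs ξ, abs_nonneg ξ]
  have h1ξ : (0:ℝ) < 1 + ξ^2 := by nlinarith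
  have hΓα : Complex.Gamma ((a:ℂ) + ξ*Complex.I) ≠ 0 := Gamma_pos_re_ne_zero a ξ ha
  have hΓβ : Complex.Gamma ((b:ℂ) + ξ*Complex.I) ≠ 0 := Gamma_pos_re_ne_zero b ξ hb
  set A := ‖ Complex.Gamma ((a:ℂ) + ξ*Complex.I)
      / Complex.Gamma ((b:ℂ) + ξ*Complex.I)‖ with hA
  have hA0 : 0 < A := by
    rw [hA]
    exact norm_pos_iff.mpr (div_ne_zero hΓα hΓβ)
  -- convergence of the GammaSeq ratio
  have hQtend : Filter.Tendsto (fun n : ℕ => ‖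
      Complex.GammaSeq ((a:ℂ) + ξ*Complex.I) n / Complex.GammaSeq ((b:ℂ) + ξ*Complex.I) n‖)
      Filter.atTop (nhds A) := by
    have h1 := (Complex.GammaSeq_tendsto_Gamma ((a:ℂ) + ξ*Complex.I)).div
      (Complex.GammaSeq_tendsto_Gamma ((b:ℂ) + ξ*Complex.I)) hΓβ
    exact (continuous_norm.tendsto _).comp h1
  have hlogtend : Filter.Tendsto (fun n : ℕ => 2 * Real.log (‖
      Complex.GammaSeq ((a:ℂ) + ξ*Complex.I) n / Complex.GammaSeq ((b:ℂ) + ξ*Complex.I) n‖))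
      Filter.atTop (nhds (2 * Real.log A)) := by
    have h2 := ((Real.continuousAt_log hA0.ne').tendsto.comp hQtend).const_mul (2:ℝ)
    simpa [Function.comp] using h2
  have hcorr := corr_tendsto (a-b) (min a b) ξ hm0
  have hgtend : Filter.Tendsto (fun n : ℕ => 2 * Real.log (‖
      Complex.GammaSeq ((a:ℂ) + ξ*Complex.I) n / Complex.GammaSeq ((b:ℂ) + ξ*Complex.I) n‖)
      - (a-b)*(2*Real.log n - Real.log ((min a b+n+1)^2+ξ^2)))
      Filter.atTop (nhds (2 * Real.log A)) := by
    have h3 := hlogtend.sub hcorr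
    simpa using h3
  have hbound : ∀ᶠ n : ℕ in Filter.atTop, (a-b) * Real.log (1+ξ^2) - M
      ≤ 2 * Real.log (‖
      Complex.GammaSeq ((a:ℂ) + ξ*Complex.I) n / Complex.GammaSeq ((b:ℂ) + ξ*Complex.I) n‖)
      - (a-b)*(2*Real.log n - Real.log ((min a b+n+1)^2+ξ^2)) := by
    filter_upwards [Filter.eventually_ge_atTop 1] with n hn
    have h2lr := two_log_ratio a b ξ ha hb n hn
    have hks := key_sum a b ξ ha hb hξ (n+1)
    have hcast : ((n+1:ℕ):ℝ) = (n:ℝ)+1 := by push_cast; ring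
    rw [hcast] at hks
    set D := ∑ k ∈ range (n+1), (Real.log ((a+k)^2+ξ^2) - Real.log ((b+k)^2+ξ^2)) with hD
    have hSD : ∑ k ∈ range (n+1), (Real.log ((b+k)^2+ξ^2) - Real.log ((a+k)^2+ξ^2)) = -D := by
      rw [hD, ← Finset.sum_neg_distrib]
      apply Finset.sum_congr rfl
      intro k _; ring
    rw [hSD] at h2lr
    -- from hks : |D - (a-b)*(log((min+(n+1))²+ξ²) - log(min²+ξ²))| ≤ K1
    have hks' : D ≤ (a-b) * (Real.log ((min a b+((n:ℝ)+1))^2+ξ^2) - Real.log ((min a b)^2+ξ^2)) + K1 := by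
      have := (abs_le.mp hks).2
      linarith
    -- lower bound for (a-b) * log(min² + ξ²) against (a-b) log(1+ξ²)
    have hr : (a-b) * Real.log (((min a b)^2+ξ^2)/(1+ξ^2)) ≥ -M2 := by
      have hmx : (0:ℝ) < max 1 ((min a b)^2) := lt_max_of_lt_left one_pos
      have hrpos : (0:ℝ) < ((min a b)^2+ξ^2)/(1+ξ^2) := by positivity
      have hru : ((min a b)^2+ξ^2)/(1+ξ^2) ≤ 2 * max 1 ((min a b)^2) := by
        rw [div_le_iff₀ h1ξ]
        have h4 : (min a b)^2 ≤ max 1 ((min a b)^2) := le_max_right _ _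
        have h5 : (1:ℝ) ≤ max 1 ((min a b)^2) := le_max_left _ _
        nlinarith
      have hrl : 1/(2 * max 1 ((min a b)^2)) ≤ ((min a b)^2+ξ^2)/(1+ξ^2) := by
        rw [div_le_div_iff₀ (by positivity) h1ξ]
        have h5 : (1:ℝ) ≤ max 1 ((min a b)^2) := le_max_left _ _
        nlinarith [sq_nonneg (min a b)]
      have habs : |Real.log (((min a b)^2+ξ^2)/(1+ξ^2))| ≤ Real.log (2 * max 1 ((min a b)^2)) := by
        rw [abs_le]
        constructor
        · rw [← Real.log_inv, ← one_div]
          exact Real.log_le_log (by positivity) hrl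
        · exact Real.log_le_log hrpos hru
      have h6 : |(a-b) * Real.log (((min a b)^2+ξ^2)/(1+ξ^2))| ≤ M2 := by
        rw [abs_mul, hM2]
        exact mul_le_mul_of_nonneg_left habs (abs_nonneg _)
      linarith [neg_abs_le ((a-b) * Real.log (((min a b)^2+ξ^2)/(1+ξ^2)))]
    have hlogdiv : Real.log (((min a b)^2+ξ^2)/(1+ξ^2))
        = Real.log ((min a b)^2+ξ^2) - Real.log (1+ξ^2) := by
      apply Real.log_div (by positivity) (ne_of_gt h1ξ)
    rw [hlogdiv] at hr
    have hnn : (min a b + ((n:ℝ)+1)) = (min a b + n + 1) := by ring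
    rw [hnn] at hks'
    rw [h2lr]
    nlinarith [hks', hr]
  have hfinal : (a-b) * Real.log (1+ξ^2) - M ≤ 2 * Real.log A :=
    ge_of_tendsto hgtend hbound
  have hexp : Real.exp (-M/2) * (1+ξ^2)^((a-b)/2)
      = Real.exp (((a-b)*Real.log (1+ξ^2) - M)/2) := by
    rw [Real.rpow_def_of_pos h1ξ, ← Real.exp_add]
    congr 1
    ring
  calc Real.exp (-M/2) * (1+ξ^2)^((a-b)/2)
      = Real.exp (((a-b)*Real.log (1+ξ^2) - M)/2) := hexp
    _ ≤ Real.exp (Real.log A) := Real.exp_le_exp.mpr (by linarith)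
    _ = A := Real.exp_log hA0
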